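/- Suppose n cars park on a circle with n+1 spots, the first car's preference is fixed to spot 1, and the remaining n−1 cars have uniformly random preferences in [n+1]. Then the expected number of preference vectors containing exactly k unlucky cars (0 ≤ k < n) is U_n(k) = n!·Σ_{C_k ⊆ {2,...,n}, |C_k| = k} Π_{i ∈ C_k} (i−1)/((n+1)−(i−1)). Equivalently, Σ_{k=0}^{n−1} U_n(k) q^k = Π_{i=2}^n [(i−1)q + (n+2−i)]. -/

import Mathlib

open Finset

/-- `U_n(k) = n!·Σ_{C ⊆ {2,...,n}, |C| = k} Π_{i ∈ C} (i−1)/((n+1)−(i−1))`: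
the expected number of preference vectors in `[n+1]^n` (first car's preference fixed
to spot 1) with exactly `k` unlucky cars. -/
def Un (n k : ℕ) : ℚ :=
  (n.factorial : ℚ) *
    ∑ C ∈ (Finset.Icc 2 n).powersetCard k,
      ∏ i ∈ C, ((i : ℚ) - 1) / (((n : ℚ) + 1) - ((i : ℚ) - 1))

lemma nat_prod (n : ℕ) : ∏ i ∈ Finset.Icc 2 n, (n + 2 - i) = n.factorial := by
  have h : ∏ i ∈ Finset.Icc 2 n, (n + 2 - i) = ∏ i ∈ Finset.Icc 2 n, i := by
    apply Finset.prod_nbij' (fun i => n + 2 - i) (fun i => n + 2 - i)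
    · intro a ha
      simp only [mem_Icc] at ha ⊢
      omega
    · intro a ha
      simp only [mem_Icc] at ha ⊢
      omega
    · intro a ha; simp only [mem_Icc] at ha; omega
    · intro a ha; simp only [mem_Icc] at ha; omega
    · intro a ha; rfl
  rw [h]
  rcases Nat.eq_zero_or_pos n with h0 | h0
  · subst h0; simp
  · have : Finset.Icc 1 n = insert 1 (Finset.Icc 2 n) := by
      ext x; simp only [mem_Icc, mem_insert]; omega
    have h2 : ∏ i ∈ Finset.Icc 1 n, i = n.factorial := by
      rw [show Finset.Icc 1 n = Finset.Ico 1 (n+1) by rfl]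
      exact Finset.prod_Ico_id_eq_factorial n
    rw [this, Finset.prod_insert (by simp), one_mul] at h2
    exact h2

lemma rat_prod (n : ℕ) :
    ∏ i ∈ Finset.Icc 2 n, (((n : ℚ) + 1) - ((i : ℚ) - 1)) = (n.factorial : ℚ) := by
  rw [← nat_prod n]
  push_cast
  apply Finset.prod_congr rfl
  intro i hi
  simp only [mem_Icc] at hi
  have : (i : ℚ) ≤ (n : ℚ) + 2 := by
    have : (i : ℚ) ≤ (n : ℚ) := by exact_mod_cast hi.2
    linarith
  rw [Nat.cast_sub (by omega)]
  push_cast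
  ring

lemma denom_ne (n i : ℕ) (hi : i ∈ Finset.Icc 2 n) :
    (((n : ℚ) + 1) - ((i : ℚ) - 1)) ≠ 0 := by
  simp only [mem_Icc] at hi
  have : (i : ℚ) ≤ (n : ℚ) := by exact_mod_cast hi.2
  intro h; linarith [h]

lemma part1 (n k : ℕ) :
    Un n k = ∑ C ∈ (Finset.Icc 2 n).powersetCard k,
      ∏ i ∈ Finset.Icc 2 n,
        (if i ∈ C then (i : ℚ) - 1 else ((n : ℚ) + 1) - ((i : ℚ) - 1)) := by
  rw [Un, Finset.mul_sum]
  apply Finset.sum_congr rfl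
  intro C hC
  rw [mem_powersetCard] at hC
  obtain ⟨hsub, hcard⟩ := hC
  rw [← rat_prod n, ← Finset.prod_sdiff hsub]
  have : ∏ i ∈ Finset.Icc 2 n,
      (if i ∈ C then (i : ℚ) - 1 else ((n : ℚ) + 1) - ((i : ℚ) - 1))
      = (∏ i ∈ Finset.Icc 2 n \ C, (((n : ℚ) + 1) - ((i : ℚ) - 1))) *
        ∏ i ∈ C, ((i : ℚ) - 1) := by
    rw [← Finset.prod_sdiff hsub]
    congr 1
    · apply Finset.prod_congr rfl
      intro i hi
      rw [if_neg (Finset.mem_sdiff.mp hi).2]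
    · apply Finset.prod_congr rfl
      intro i hi
      rw [if_pos hi]
  rw [this, mul_assoc]
  congr 1
  rw [← Finset.prod_mul_distrib]
  apply Finset.prod_congr rfl
  intro i hi
  rw [mul_div_cancel₀ _ (denom_ne n i (hsub hi))]

/-- **Theorem 7 (lucky and unlucky cars).** Suppose `n` cars park on a circle with `n+1`
spots, the first car's preference fixed to spot 1 and cars `2,...,n` with uniformly
random preferences in `[n+1]`; when car `i` enters, `i−1` spots are occupied, so `i−1`
of its `n+1` possible preferences make it unlucky and `(n+1)−(i−1)` make it lucky.
Then the expected number of preference vectors with exactly `k` unlucky cars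
(`0 ≤ k < n`), namely `Σ_{C ⊆ {2,...,n}, |C|=k} Π_{i∈C}(i−1)·Π_{i∉C}((n+1)−(i−1))`,
equals `U_n(k) = n!·Σ_{C} Π_{i ∈ C} (i−1)/((n+1)−(i−1))`; equivalently
`Σ_{k=0}^{n−1} U_n(k) q^k = Π_{i=2}^n [(i−1)q + (n+2−i)]`. -/
theorem expected_unlucky (n : ℕ) (hn : 1 ≤ n) :
    (∀ k : ℕ, k < n →
        Un n k = ∑ C ∈ (Finset.Icc 2 n).powersetCard k,
          ∏ i ∈ Finset.Icc 2 n,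
            (if i ∈ C then (i : ℚ) - 1 else ((n : ℚ) + 1) - ((i : ℚ) - 1))) ∧
      ∀ q : ℚ, ∑ k ∈ Finset.range n, Un n k * q ^ k
        = ∏ i ∈ Finset.Icc 2 n, (((i : ℚ) - 1) * q + (((n : ℚ) + 2) - (i : ℚ))) := by
  constructor
  · intro k _; exact part1 n k
  · intro q
    have hcard : (Finset.Icc 2 n).card = n - 1 := by
      rw [Nat.card_Icc]; omega
    rw [Finset.prod_add]
    rw [Finset.sum_powerset, hcard,
      show n - 1 + 1 = n by omega]
    apply Finset.sum_congr rfl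
    intro k hk
    rw [part1 n k, Finset.sum_mul]
    apply Finset.sum_congr rfl
    intro C hC
    rw [mem_powersetCard] at hC
    obtain ⟨hsub, hkC⟩ := hC
    rw [← Finset.prod_sdiff hsub]
    have h1 : ∏ i ∈ C, ((i:ℚ) - 1) * q = (∏ i ∈ C, ((i:ℚ) - 1)) * q ^ k := by
      rw [Finset.prod_mul_distrib, Finset.prod_const, hkC]
    have h2 : ∀ i ∈ Finset.Icc 2 n \ C,
        (if i ∈ C then (i : ℚ) - 1 else ((n : ℚ) + 1) - ((i : ℚ) - 1))
        = ((n : ℚ) + 2) - (i : ℚ) := by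
      intro i hi
      rw [if_neg (Finset.mem_sdiff.mp hi).2]; ring
    have h3 : ∀ i ∈ C,
        (if i ∈ C then (i : ℚ) - 1 else ((n : ℚ) + 1) - ((i : ℚ) - 1))
        = (i : ℚ) - 1 := fun i hi => if_pos hi
    rw [Finset.prod_congr rfl h2, Finset.prod_congr rfl h3, h1]
    ring
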